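/- Let a ≤ b be integers, c ≥ 0 a real number, u : {a, …, b} → ℝ a function with 0 ≤ u_t ≤ c for all t ∈ {a, …, b}, and i : {a, …, b−1} → {0,1}. Then ∑_{t=a}^{b−1} (u_{t+1} − u_t)·i_t ≤ c + c·#{a ≤ t ≤ b−1 : i_t = 0}. -/

import Mathlib

lemma telescope_Icc (a b : ℤ) (hab : a ≤ b) (u : ℤ → ℝ) :
    ∑ t ∈ Finset.Icc a (b - 1), (u (t + 1) - u t) = u b - u a := by
  refine Int.le_induction
    (motive := fun b _ => ∑ t ∈ Finset.Icc a (b - 1), (u (t + 1) - u t) = u b - u a) ?_ ?_ b hab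
  · simp
  · intro n hn ih
    have hins : Finset.Icc a (n + 1 - 1) = insert n (Finset.Icc a (n - 1)) := by
      ext x; simp only [Finset.mem_Icc, Finset.mem_insert]; omega
    have hnot : n ∉ Finset.Icc a (n - 1) := by simp
    rw [hins, Finset.sum_insert hnot, ih]; ring

/-- Truncated telescoping bound: if `0 ≤ u t ≤ c` on `{a, …, b}` and
`i` is a `{0,1}`-valued indicator on `{a, …, b−1}`, then
`∑_{t=a}^{b−1} (u_{t+1} − u_t)·i_t ≤ c + c·#{a ≤ t ≤ b−1 : i_t = 0}`. -/
theorem truncated_telescoping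
    (a b : ℤ) (hab : a ≤ b) (c : ℝ) (hc : 0 ≤ c)
    (u : ℤ → ℝ) (hu : ∀ t ∈ Finset.Icc a b, 0 ≤ u t ∧ u t ≤ c)
    (i : ℤ → ℝ) (hi : ∀ t ∈ Finset.Icc a (b - 1), i t = 0 ∨ i t = 1) :
    ∑ t ∈ Finset.Icc a (b - 1), (u (t + 1) - u t) * i t
      ≤ c + c * ((Finset.Icc a (b - 1)).filter (fun t => i t = 0)).card := by
  have key : ∀ t ∈ Finset.Icc a (b - 1),
      (u (t + 1) - u t) * i t
        ≤ (u (t + 1) - u t) + (if i t = 0 then c else 0) := by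
    intro t ht
    have htmem : t ∈ Finset.Icc a b := by
      simp only [Finset.mem_Icc] at ht ⊢; omega
    have htmem' : t + 1 ∈ Finset.Icc a b := by
      simp only [Finset.mem_Icc] at ht ⊢; omega
    have h1 := hu t htmem
    have h2 := hu (t + 1) htmem'
    rcases hi t ht with h | h
    · simp [h]; nlinarith [h1.1, h1.2, h2.1, h2.2]
    · have : i t ≠ 0 := by rw [h]; norm_num
      simp [h, this]
  calc ∑ t ∈ Finset.Icc a (b - 1), (u (t + 1) - u t) * i t
      ≤ ∑ t ∈ Finset.Icc a (b - 1), ((u (t + 1) - u t) + (if i t = 0 then c else 0)) :=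
        Finset.sum_le_sum key
    _ = (u b - u a) + c * ((Finset.Icc a (b - 1)).filter (fun t => i t = 0)).card := by
        rw [Finset.sum_add_distrib, telescope_Icc a b hab u, ← Finset.sum_filter,
          Finset.sum_const, nsmul_eq_mul, mul_comm]
    _ ≤ c + c * ((Finset.Icc a (b - 1)).filter (fun t => i t = 0)).card := by
        have ha := hu a (by simp [Finset.mem_Icc]; omega)
        have hb := hu b (by simp [Finset.mem_Icc]; omega)
        nlinarith [ha.1, ha.2, hb.1, hb.2]
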